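/- Let s be a positive integer, let K be a complex Hadamard matrix of order s+1 that is normalized (all entries of its first row equal 1), and let T be the s×(s+1) matrix consisting of the s noninitial rows of K. Let X, Y be s×s matrices and D an (s+1)×(s+1) matrix with unimodular entries such that the Petrescu array H = [[X, Y, T], [Y, X, T], [T*, T*, D]] is a complex Hadamard matrix of order 3s+1. Then D D* = D* D = (s−1) I_{s+1} + 2 J_{s+1}, where J_{s+1} is the all-ones matrix of order s+1; in particular D is a normal matrix. -/

import Mathlib

open Matrix

/-- Petrescu's array: the `(3s+1) × (3s+1)` block matrix
`[[X, Y, T], [Y, X, T], [Tᴴ, Tᴴ, D]]`. -/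
def petrescuArray {s : ℕ} (X Y : Matrix (Fin s) (Fin s) ℂ)
    (T : Matrix (Fin s) (Fin (s + 1)) ℂ) (D : Matrix (Fin (s + 1)) (Fin (s + 1)) ℂ) :
    Matrix ((Fin s ⊕ Fin s) ⊕ Fin (s + 1)) ((Fin s ⊕ Fin s) ⊕ Fin (s + 1)) ℂ :=
  Matrix.fromBlocks (Matrix.fromBlocks X Y Y X) (Matrix.fromRows T T)
    (Matrix.fromCols Tᴴ Tᴴ) D

/-- The `m × m` all-ones matrix. -/
def allOnes (m : ℕ) : Matrix (Fin m) (Fin m) ℂ := Matrix.of fun _ _ => 1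

lemma had_comm {n : Type*} [Fintype n] [DecidableEq n] (A : Matrix n n ℂ) (c : ℂ)
    (hc : c ≠ 0) (h : A * Aᴴ = c • 1) : Aᴴ * A = c • 1 := by
  have h1 : A * (c⁻¹ • Aᴴ) = 1 := by
    rw [Matrix.mul_smul, h, smul_smul, inv_mul_cancel₀ hc, one_smul]
  have h2 := mul_eq_one_comm.mp h1
  calc Aᴴ * A = c • ((c⁻¹ • Aᴴ) * A) := by
        rw [Matrix.smul_mul, smul_smul, mul_inv_cancel₀ hc, one_smul]
    _ = c • 1 := by rw [h2]

/-- If Petrescu's array built from the noninitial rows `T` of a normalized complex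
Hadamard matrix of order `s+1` and unimodular `X, Y, D` is a complex Hadamard
matrix of order `3s+1`, then `D Dᴴ = Dᴴ D = (s-1) I + 2 J`; in particular `D`
is normal. -/
theorem petrescu_D_biplane (s : ℕ) (hs : 0 < s)
    (K : Matrix (Fin (s + 1)) (Fin (s + 1)) ℂ)
    (hKuni : ∀ i j, ‖K i j‖ = 1)
    (hKhad : K * Kᴴ = ((s + 1 : ℕ) : ℂ) • 1)
    (hKnorm : ∀ j, K 0 j = 1)
    (T : Matrix (Fin s) (Fin (s + 1)) ℂ)
    (hT : ∀ (i : Fin s) (j : Fin (s + 1)), T i j = K i.succ j)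
    (X Y : Matrix (Fin s) (Fin s) ℂ)
    (D : Matrix (Fin (s + 1)) (Fin (s + 1)) ℂ)
    (hX : ∀ i j, ‖X i j‖ = 1)
    (hY : ∀ i j, ‖Y i j‖ = 1)
    (hD : ∀ i j, ‖D i j‖ = 1)
    (hHuni : ∀ i j, ‖petrescuArray X Y T D i j‖ = 1)
    (hHhad : petrescuArray X Y T D * (petrescuArray X Y T D)ᴴ =
      ((3 * s + 1 : ℕ) : ℂ) • 1) :
    D * Dᴴ = ((s : ℂ) - 1) • 1 + (2 : ℂ) • allOnes (s + 1) ∧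
      Dᴴ * D = ((s : ℂ) - 1) • 1 + (2 : ℂ) • allOnes (s + 1) ∧
      D * Dᴴ = Dᴴ * D := by
  have hc : ((3 * s + 1 : ℕ) : ℂ) ≠ 0 := Nat.cast_ne_zero.mpr (by omega)
  have hc1 : ((s + 1 : ℕ) : ℂ) ≠ 0 := Nat.cast_ne_zero.mpr (by omega)
  -- K^H K = (s+1) I
  have hK2 : Kᴴ * K = ((s + 1 : ℕ) : ℂ) • 1 := had_comm K _ hc1 hKhad
  -- T^H T = (s+1) I - J
  have hM : Tᴴ * T = ((s + 1 : ℕ) : ℂ) • 1 - allOnes (s + 1) := by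
    ext j k
    have h1 := congrFun (congrFun hK2 j) k
    rw [Matrix.mul_apply] at h1
    rw [Fin.sum_univ_succ] at h1
    simp only [Matrix.conjTranspose_apply, hKnorm, star_one, one_mul] at h1
    simp only [Matrix.mul_apply, Matrix.conjTranspose_apply, Matrix.sub_apply,
      Matrix.smul_apply, allOnes, Matrix.of_apply, hT]
    rw [eq_sub_iff_add_eq]
    simp only [Matrix.smul_apply] at h1
    linear_combination h1
  -- extract block (2,2) of hHhad
  have hHT := had_comm _ _ hc hHhad
  rw [petrescuArray, Matrix.fromBlocks_conjTranspose, Matrix.fromBlocks_multiply] at hHhad hHT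
  have hB1 := congrArg Matrix.toBlocks₂₂ hHhad
  have hB2 := congrArg Matrix.toBlocks₂₂ hHT
  have hRHS : ((((3 * s + 1 : ℕ) : ℂ) • (1 : Matrix ((Fin s ⊕ Fin s) ⊕ Fin (s+1)) ((Fin s ⊕ Fin s) ⊕ Fin (s+1)) ℂ)).toBlocks₂₂ : Matrix (Fin (s+1)) (Fin (s+1)) ℂ) = ((3 * s + 1 : ℕ) : ℂ) • 1 := by
    ext i j
    simp [Matrix.toBlocks₂₂, Matrix.one_apply]
  rw [Matrix.toBlocks_fromBlocks₂₂, hRHS] at hB1 hB2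
  rw [Matrix.conjTranspose_fromCols_eq_fromRows_conjTranspose, Matrix.conjTranspose_conjTranspose,
    Matrix.fromCols_mul_fromRows] at hB1
  rw [Matrix.conjTranspose_fromRows_eq_fromCols_conjTranspose,
    Matrix.fromCols_mul_fromRows] at hB2
  -- hB1 : Tᴴ*T + Tᴴ*T + D*Dᴴ = (3s+1)•1 ;  hB2 : Tᴴ*T + Tᴴ*T + Dᴴ*D = (3s+1)•1
  have key : ∀ M : Matrix (Fin (s+1)) (Fin (s+1)) ℂ,
      (Tᴴ * T + Tᴴ * T) + M = ((3 * s + 1 : ℕ) : ℂ) • 1 →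
      M = ((s : ℂ) - 1) • 1 + (2 : ℂ) • allOnes (s + 1) := by
    intro M h
    have : M = ((3 * s + 1 : ℕ) : ℂ) • 1 - (Tᴴ * T + Tᴴ * T) := by
      rw [← h]; abel
    rw [this, hM]
    ext i j
    simp only [Matrix.sub_apply, Matrix.add_apply, Matrix.smul_apply, allOnes, Matrix.of_apply,
      smul_eq_mul, mul_one]
    rcases eq_or_ne i j with rfl | hij
    · simp only [Matrix.one_apply_eq]; push_cast; ring
    · simp only [Matrix.one_apply_ne hij]; push_cast; ring
  have h1 := key _ hB1
  have h2 := key _ hB2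
  exact ⟨h1, h2, h1.trans h2.symm⟩
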